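/- Define learning rates α_t = (H+1)/(H+t) for t ≥ 1, and weights α_t^i = α_i · ∏_{j=i+1}^t (1 − α_j) for 1 ≤ i ≤ t. Then for every t ≥ 1: 1/√t ≤ ∑_{i=1}^t α_t^i/√i ≤ 2/√t. -/

import Mathlib

/-- Learning rate `α_t = (H+1)/(H+t)`. -/
noncomputable def lr (H t : ℕ) : ℝ := (H + 1) / (H + t)

/-- Weight `α_t^i = α_i ∏_{j=i+1}^t (1 - α_j)`. -/
noncomputable def lrW (H t i : ℕ) : ℝ :=
  lr H i * ∏ j ∈ Finset.Icc (i + 1) t, (1 - lr H j)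

lemma lr_pos (H t : ℕ) (hH : 1 ≤ H) : 0 < lr H t := by
  unfold lr
  have h1 : (0:ℝ) < H := by exact_mod_cast hH
  positivity

lemma lr_le_one (H t : ℕ) (hH : 1 ≤ H) (ht : 1 ≤ t) : lr H t ≤ 1 := by
  unfold lr
  have h1 : (0:ℝ) < H := by exact_mod_cast hH
  rw [div_le_one (by positivity)]
  have : (1:ℝ) ≤ t := by exact_mod_cast ht
  linarith

lemma lr_one (H : ℕ) : lr H 1 = 1 := by
  unfold lr
  rw [Nat.cast_one, div_self]
  positivity

lemma lrW_nonneg (H t i : ℕ) (hH : 1 ≤ H) : 0 ≤ lrW H t i := by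
  unfold lrW
  apply mul_nonneg (le_of_lt (lr_pos H i hH))
  apply Finset.prod_nonneg
  intro j hj
  simp only [Finset.mem_Icc] at hj
  have : 1 ≤ j := le_trans (Nat.le_add_left 1 i) hj.1
  linarith [lr_le_one H j hH this]

lemma lrW_self (H t : ℕ) : lrW H t t = lr H t := by
  unfold lrW
  rw [Finset.Icc_eq_empty (by omega), Finset.prod_empty, mul_one]

lemma lrW_succ (H t i : ℕ) (h : i ≤ t) :
    lrW H (t + 1) i = (1 - lr H (t + 1)) * lrW H t i := by
  unfold lrW
  rw [Finset.prod_Icc_succ_top (by omega)]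
  ring

lemma sum_lrW (H : ℕ) (hH : 1 ≤ H) (t : ℕ) (ht : 1 ≤ t) :
    ∑ i ∈ Finset.Icc 1 t, lrW H t i = 1 := by
  induction t, ht using Nat.le_induction with
  | base =>
    simp [lrW_self, lr_one]
  | succ t ht ih =>
    rw [Finset.sum_Icc_succ_top (by omega), lrW_self,
      Finset.sum_congr rfl (fun i hi => lrW_succ H t i (Finset.mem_Icc.mp hi).2),
      ← Finset.mul_sum, ih]
    ring

lemma upper_bound (H : ℕ) (hH : 1 ≤ H) (t : ℕ) (ht : 1 ≤ t) :
    ∑ i ∈ Finset.Icc 1 t, lrW H t i / Real.sqrt i ≤ 2 / Real.sqrt t := by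
  induction t, ht using Nat.le_induction with
  | base =>
    simp [lrW_self, lr_one]
  | succ t ht ih =>
    rw [Finset.sum_Icc_succ_top (by omega), lrW_self,
      Finset.sum_congr rfl (fun i hi => by
        rw [lrW_succ H t i (Finset.mem_Icc.mp hi).2, mul_div_assoc])]
    rw [← Finset.mul_sum]
    have ht1 : (1:ℝ) ≤ t := by exact_mod_cast ht
    have ha : 0 < Real.sqrt t := Real.sqrt_pos.2 (by linarith)
    have hb : 0 < Real.sqrt ((t:ℕ) + 1 : ℕ) := Real.sqrt_pos.2 (by positivity)
    have hα : 0 ≤ 1 - lr H (t + 1) := by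
      linarith [lr_le_one H (t + 1) hH (by omega)]
    have step1 : (1 - lr H (t + 1)) * ∑ i ∈ Finset.Icc 1 t, lrW H t i / Real.sqrt i
        ≤ (1 - lr H (t + 1)) * (2 / Real.sqrt t) :=
      mul_le_mul_of_nonneg_left ih hα
    have key : (1 - lr H (t + 1)) * (2 / Real.sqrt t) + lr H (t + 1) / Real.sqrt ((t:ℕ) + 1 : ℕ)
        ≤ 2 / Real.sqrt ((t:ℕ) + 1 : ℕ) := by
      have ha2 : Real.sqrt t ^ 2 = t := Real.sq_sqrt (by linarith)
      have hb2 : Real.sqrt ((t:ℕ) + 1 : ℕ) ^ 2 = (t:ℝ) + 1 := by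
        rw [Real.sq_sqrt (by positivity)]
        push_cast; ring
      have hab : 2 * Real.sqrt t * Real.sqrt ((t:ℕ) + 1 : ℕ)
          ≤ Real.sqrt t ^ 2 + Real.sqrt ((t:ℕ) + 1 : ℕ) ^ 2 := two_mul_le_add_sq _ _
      have hHr : (1:ℝ) ≤ H := by exact_mod_cast hH
      set a := Real.sqrt t
      set b := Real.sqrt ((t:ℕ) + 1 : ℕ)
      unfold lr
      have hden : (0:ℝ) < (H:ℝ) + ((t:ℕ)+1:ℕ) := by positivity
      push_cast at hden ⊢
      have h1 : (1 - ((H:ℝ) + 1) / ((H:ℝ) + ((t:ℝ) + 1))) = (t:ℝ) / ((H:ℝ) + ((t:ℝ) + 1)) := by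
        field_simp
        ring
      rw [h1]
      have hnum : 0 ≤ 2 * ((H:ℝ) + ((t:ℝ) + 1)) * a - (2 * (t:ℝ) * b + ((H:ℝ) + 1) * a) := by
        nlinarith [mul_le_mul_of_nonneg_left hab ha.le, ha2, hb2, hHr, ha.le]
      have hdiff : 2 / b - ((t:ℝ) / ((H:ℝ) + ((t:ℝ) + 1)) * (2 / a)
            + ((H:ℝ) + 1) / ((H:ℝ) + ((t:ℝ) + 1)) / b)
          = (2 * ((H:ℝ) + ((t:ℝ) + 1)) * a - (2 * (t:ℝ) * b + ((H:ℝ) + 1) * a))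
            / (((H:ℝ) + ((t:ℝ) + 1)) * a * b) := by
        field_simp
      have hfrac : 0 ≤ (2 * ((H:ℝ) + ((t:ℝ) + 1)) * a - (2 * (t:ℝ) * b + ((H:ℝ) + 1) * a))
            / (((H:ℝ) + ((t:ℝ) + 1)) * a * b) :=
        div_nonneg hnum (by positivity)
      linarith [hdiff, hfrac]
    calc (1 - lr H (t + 1)) * ∑ i ∈ Finset.Icc 1 t, lrW H t i / Real.sqrt i
          + lr H (t + 1) / Real.sqrt ((t:ℕ) + 1 : ℕ)
        ≤ (1 - lr H (t + 1)) * (2 / Real.sqrt t) + lr H (t + 1) / Real.sqrt ((t:ℕ) + 1 : ℕ) := by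
          linarith
      _ ≤ 2 / Real.sqrt ((t:ℕ) + 1 : ℕ) := key

theorem stmt3 (H : ℕ) (hH : 1 ≤ H) (t : ℕ) (ht : 1 ≤ t) :
    1 / Real.sqrt t ≤ ∑ i ∈ Finset.Icc 1 t, lrW H t i / Real.sqrt i ∧
    ∑ i ∈ Finset.Icc 1 t, lrW H t i / Real.sqrt i ≤ 2 / Real.sqrt t := by
  constructor
  · have ht1 : (1:ℝ) ≤ t := by exact_mod_cast ht
    have hst : 0 < Real.sqrt t := Real.sqrt_pos.2 (by linarith)
    calc 1 / Real.sqrt t = (∑ i ∈ Finset.Icc 1 t, lrW H t i) / Real.sqrt t := by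
          rw [sum_lrW H hH t ht]
      _ = ∑ i ∈ Finset.Icc 1 t, lrW H t i / Real.sqrt t := Finset.sum_div _ _ _
      _ ≤ ∑ i ∈ Finset.Icc 1 t, lrW H t i / Real.sqrt i := by
          apply Finset.sum_le_sum
          intro i hi
          obtain ⟨hi1, hit⟩ := Finset.mem_Icc.mp hi
          have hi1' : (1:ℝ) ≤ i := by exact_mod_cast hi1
          have hsi : 0 < Real.sqrt i := Real.sqrt_pos.2 (by linarith)
          apply div_le_div_of_nonneg_left (lrW_nonneg H t i hH) hsi
          exact Real.sqrt_le_sqrt (by exact_mod_cast hit)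
  · exact upper_bound H hH t ht
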